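/- arXiv:2409.09571 — 5 statements merged into one kernel-verified Lean document; each statement's English description precedes it below -/
import Mathlib

section
/- Let A ∈ ℝ^{n×n}, B ∈ ℝ^{n×m}, and suppose P* is a symmetric positive definite solution of the algebraic Riccati equation AᵀP* + P*A + Q − P*BR⁻¹BᵀP* = 0, where Q is symmetric positive definite and R symmetric positive definite. Then the matrix A − BR⁻¹BᵀP* is Hurwitz (all its eigenvalues have negative real part). -/
open Matrix Complex

lemma re_quad {n : ℕ} (Q : Matrix (Fin n) (Fin n) ℝ) (v : Fin n → ℂ) :
    (star v ⬝ᵥ (Q.map Complex.ofReal) *ᵥ v).re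
      = (fun i => (v i).re) ⬝ᵥ Q *ᵥ (fun i => (v i).re)
        + (fun i => (v i).im) ⬝ᵥ Q *ᵥ (fun i => (v i).im) := by
  simp only [dotProduct, mulVec, Matrix.map_apply, Pi.star_apply, RCLike.star_def,
    Complex.re_sum, Complex.mul_re, Complex.conj_re, Complex.conj_im,
    Finset.mul_sum, Finset.sum_mul, re_sum, im_sum, Complex.ofReal_re, Complex.ofReal_im]
  rw [← Finset.sum_add_distrib]
  apply Finset.sum_congr rfl
  intro i _
  rw [← Finset.sum_add_distrib]
  apply Finset.sum_congr rfl
  intro j _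
  simp [Complex.mul_im]

lemma mulVec_map_star {n : ℕ} (Q : Matrix (Fin n) (Fin n) ℝ) (v : Fin n → ℂ) :
    (Q.map Complex.ofReal) *ᵥ (star v) = star ((Q.map Complex.ofReal) *ᵥ v) := by
  funext i
  simp only [mulVec, dotProduct, Matrix.map_apply, Pi.star_apply, RCLike.star_def, ← map_sum]
  rw [map_sum]
  refine Finset.sum_congr rfl fun j _ => ?_
  simp [Complex.ext_iff, mul_comm]

lemma re_quad_pos {n : ℕ} {Q : Matrix (Fin n) (Fin n) ℝ} (hQ : Q.PosDef)
    {v : Fin n → ℂ} (hv : v ≠ 0) :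
    0 < (star v ⬝ᵥ (Q.map Complex.ofReal) *ᵥ v).re := by
  rw [re_quad]
  set x : Fin n → ℝ := fun i => (v i).re with hx
  set y : Fin n → ℝ := fun i => (v i).im with hy
  have hxy : x ≠ 0 ∨ y ≠ 0 := by
    by_contra h
    push_neg at h
    apply hv
    funext i
    have h1 := congrFun h.1 i
    have h2 := congrFun h.2 i
    simp only [hx, hy, Pi.zero_apply] at h1 h2
    exact Complex.ext h1 h2
  have hxq : ∀ z : Fin n → ℝ, 0 ≤ z ⬝ᵥ Q *ᵥ z := by
    intro z
    simpa using hQ.posSemidef.dotProduct_mulVec_nonneg z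
  rcases hxy with h | h
  · have := hQ.dotProduct_mulVec_pos h
    simp only [star_trivial] at this
    linarith [hxq y]
  · have := hQ.dotProduct_mulVec_pos h
    simp only [star_trivial] at this
    linarith [hxq x]

lemma re_quad_nonneg {n : ℕ} {Q : Matrix (Fin n) (Fin n) ℝ} (hQ : Q.PosSemidef)
    (v : Fin n → ℂ) :
    0 ≤ (star v ⬝ᵥ (Q.map Complex.ofReal) *ᵥ v).re := by
  rw [re_quad]
  have h1 := hQ.dotProduct_mulVec_nonneg (fun i => (v i).re)
  have h2 := hQ.dotProduct_mulVec_nonneg (fun i => (v i).im)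
  simp only [star_trivial] at h1 h2
  linarith

/-- A real square matrix is Hurwitz if all its (complex) eigenvalues have
negative real part. -/
def IsHurwitz {ι : Type*} [Fintype ι] [DecidableEq ι] (A : Matrix ι ι ℝ) : Prop :=
  ∀ μ ∈ spectrum ℂ (A.map Complex.ofReal), μ.re < 0

theorem are_solution_gives_hurwitz {n m : ℕ}
    (A : Matrix (Fin n) (Fin n) ℝ) (B : Matrix (Fin n) (Fin m) ℝ)
    (Q P : Matrix (Fin n) (Fin n) ℝ) (R : Matrix (Fin m) (Fin m) ℝ)
    (hQ : Q.PosDef) (hQs : Q.IsSymm) (hR : R.PosDef) (hRs : R.IsSymm)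
    (hPs : P.IsSymm) (hP : P.PosDef)
    (hare : Aᵀ * P + P * A + Q - P * B * R⁻¹ * Bᵀ * P = 0) :
    IsHurwitz (A - B * R⁻¹ * Bᵀ * P) := by
  intro μ hμ
  set K : Matrix (Fin n) (Fin n) ℝ := A - B * R⁻¹ * Bᵀ * P with hKdef
  set S : Matrix (Fin n) (Fin n) ℝ := P * B * R⁻¹ * Bᵀ * P with hSdef
  have hinv : (R⁻¹)ᵀ = R⁻¹ := by rw [Matrix.transpose_nonsing_inv, hRs.eq]
  -- the Lyapunov identity
  have hK : Kᵀ = Aᵀ - P * B * R⁻¹ * Bᵀ := by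
    simp [hKdef, transpose_sub, transpose_mul, hPs.eq, hinv, Matrix.mul_assoc]
  have key : Kᵀ * P + P * K + (Q + S) = 0 := by
    rw [hK, hKdef, hSdef]
    calc (Aᵀ - P * B * R⁻¹ * Bᵀ) * P + P * (A - B * R⁻¹ * Bᵀ * P)
          + (Q + P * B * R⁻¹ * Bᵀ * P)
        = Aᵀ * P + P * A + Q - P * B * R⁻¹ * Bᵀ * P := by
          simp only [Matrix.sub_mul, Matrix.mul_sub, ← Matrix.mul_assoc]
          abel
      _ = 0 := hare
  -- S is positive semidefinite
  have hS : S.PosSemidef := by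
    have h1 : ((Bᵀ * P)ᴴ * R⁻¹ * (Bᵀ * P)).PosSemidef :=
      (hR.inv.posSemidef).conjTranspose_mul_mul_same (Bᵀ * P)
    have h2 : (Bᵀ * P)ᴴ = P * B := by
      simp [conjTranspose_eq_transpose_of_trivial, transpose_mul, hPs.eq]
    rw [h2] at h1
    simpa [hSdef, Matrix.mul_assoc] using h1
  -- move to ℂ
  set f : ℝ →+* ℂ := Complex.ofRealHom with hf
  have hfc : ⇑f = Complex.ofReal := rfl
  set Kc := K.map Complex.ofReal with hKc
  set Pc := P.map Complex.ofReal with hPc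
  set Qc := Q.map Complex.ofReal with hQc
  set Sc := S.map Complex.ofReal with hSc
  have keyC : Kcᵀ * Pc + Pc * Kc + (Qc + Sc) = 0 := by
    have h := congrArg (fun M : Matrix (Fin n) (Fin n) ℝ => f.mapMatrix M) key
    simp only [map_add, _root_.map_mul, map_zero, RingHom.mapMatrix_apply,
      ← Matrix.transpose_map] at h
    exact h
  -- get an eigenvector
  have hev : Module.End.HasEigenvalue (Matrix.toLinAlgEquiv' Kc) μ := by
    rw [Module.End.hasEigenvalue_iff_mem_spectrum]
    rwa [AlgEquiv.spectrum_eq Matrix.toLinAlgEquiv' Kc]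
  obtain ⟨v, hv⟩ := hev.exists_hasEigenvector
  have hv0 : v ≠ 0 := hv.2
  have hvK : Kc *ᵥ v = μ • v := by
    have := hv.apply_eq_smul
    simpa [Matrix.toLinAlgEquiv'_apply] using this
  -- compute the quadratic form
  set c : ℂ := star v ⬝ᵥ Pc *ᵥ v with hc
  have hterm2 : star v ⬝ᵥ (Pc * Kc) *ᵥ v = μ * c := by
    rw [← Matrix.mulVec_mulVec, hvK, Matrix.mulVec_smul, dotProduct_smul]
    simp [hc]
  have hterm1 : star v ⬝ᵥ (Kcᵀ * Pc) *ᵥ v = (starRingEnd ℂ) μ * c := by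
    rw [← Matrix.mulVec_mulVec, Matrix.dotProduct_mulVec, Matrix.vecMul_transpose,
      mulVec_map_star, hvK]
    simp [hc, Matrix.dotProduct_mulVec, star_smul, Matrix.smul_vecMul, smul_dotProduct]
  have hsum : ((starRingEnd ℂ) μ + μ) * c = -(star v ⬝ᵥ Qc *ᵥ v + star v ⬝ᵥ Sc *ᵥ v) := by
    have h0 : (Kcᵀ * Pc + Pc * Kc) = -(Qc + Sc) := by
      rw [← sub_eq_zero, sub_neg_eq_add]; exact keyC
    have h1 := congrArg (fun M => star v ⬝ᵥ M *ᵥ v) h0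
    simp only [Matrix.add_mulVec, dotProduct_add, Matrix.neg_mulVec,
      dotProduct_neg, hterm1, hterm2] at h1
    rw [add_mul]
    exact h1
  -- take real parts
  have hre : 2 * μ.re * c.re = -((star v ⬝ᵥ Qc *ᵥ v).re + (star v ⬝ᵥ Sc *ᵥ v).re) := by
    have h1 : (starRingEnd ℂ) μ + μ = ((2 * μ.re : ℝ) : ℂ) := by
      rw [add_comm, Complex.add_conj]
    rw [h1] at hsum
    have := congrArg Complex.re hsum
    simpa [Complex.re_ofReal_mul] using this
  have hcre : 0 < c.re := re_quad_pos hP hv0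
  have hqre : 0 < (star v ⬝ᵥ Qc *ᵥ v).re := re_quad_pos hQ hv0
  have hsre : 0 ≤ (star v ⬝ᵥ Sc *ᵥ v).re := re_quad_nonneg hS v
  nlinarith
end

section
/- Let A, B be matrices with A ∈ ℝ^{n×n}, B ∈ ℝ^{n×m}, let Q, R be symmetric positive definite, and suppose K_k is such that A_k = A + BK_k is Hurwitz. Let P_k be the symmetric positive definite solution of the Lyapunov equation A_kᵀP_k + P_kA_k + Q + K_kᵀRK_k = 0, and set K_{k+1} = −R⁻¹BᵀP_k. Then A + BK_{k+1} is also Hurwitz. -/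
open Matrix

open scoped ComplexOrder

namespace KleinmanAux

variable {n : ℕ}

lemma exists_eigenvector {M : Matrix (Fin n) (Fin n) ℂ} {μ : ℂ}
    (h : μ ∈ spectrum ℂ M) : ∃ v : Fin n → ℂ, v ≠ 0 ∧ M *ᵥ v = μ • v := by
  rw [spectrum.mem_iff] at h
  have hdet : (μ • (1 : Matrix (Fin n) (Fin n) ℂ) - M).det = 0 := by
    by_contra hd
    exact h (by
      simpa [Matrix.isUnit_iff_isUnit_det, Algebra.algebraMap_eq_smul_one] using
        (Ne.isUnit hd))
  obtain ⟨v, hv0, hv⟩ := (Matrix.exists_mulVec_eq_zero_iff).2 hdet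
  refine ⟨v, hv0, ?_⟩
  rw [sub_mulVec, smul_mulVec, one_mulVec, sub_eq_zero] at hv
  exact hv.symm

lemma posSemidef_posDef_of_det_ne_zero {M : Matrix (Fin n) (Fin n) ℂ}
    (h : M.PosSemidef) (hd : M.det ≠ 0) : M.PosDef := by
  refine PosDef.of_dotProduct_mulVec_pos h.1 fun x hx => lt_of_le_of_ne (h.dotProduct_mulVec_nonneg x) fun he => ?_
  have h0 : M *ᵥ x = 0 := (h.dotProduct_mulVec_zero_iff x).1 he.symm
  exact hd ((Matrix.exists_mulVec_eq_zero_iff).1 ⟨x, hx, h0⟩)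

lemma posDef_map {P : Matrix (Fin n) (Fin n) ℝ} (hP : P.PosDef) :
    (P.map Complex.ofReal).PosDef := by
  obtain ⟨C, hC⟩ : ∃ C : Matrix (Fin n) (Fin n) ℝ, P = Cᴴ * C := by
    open scoped MatrixOrder in
    obtain ⟨X, hX, -, hXP⟩ := sub_zero P ▸ CFC.exists_sqrt_of_isSelfAdjoint_of_quasispectrumRestricts
      hP.isHermitian (QuasispectrumRestricts.nnreal_of_nonneg hP.posSemidef.nonneg)
    have hXt : Xᴴ = X := hX.star_eq
    rw [sub_zero] at hXP
    exact ⟨X, by rw [hXt, hXP]⟩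
  have hmap : P.map Complex.ofReal =
      (C.map Complex.ofReal)ᴴ * (C.map Complex.ofReal) := by
    rw [hC, show ((Cᴴ * C).map Complex.ofReal) =
        (Cᴴ.map Complex.ofReal) * (C.map Complex.ofReal) from
      Matrix.map_mul (f := Complex.ofRealHom),
      Matrix.conjTranspose_map Complex.ofReal (fun a => by simp)]
  have hps : (P.map Complex.ofReal).PosSemidef := by
    rw [hmap]; exact Matrix.posSemidef_conjTranspose_mul_self _
  refine posSemidef_posDef_of_det_ne_zero hps ?_
  have : (P.map Complex.ofReal).det = (P.det : ℂ) :=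
    (RingHom.map_det Complex.ofRealHom P).symm
  rw [this]
  exact_mod_cast hP.det_pos.ne'

lemma hurwitz_of_lyap {A P : Matrix (Fin n) (Fin n) ℝ} (hP : P.PosDef)
    (hS : (-(Aᵀ * P + P * A)).PosDef) : IsHurwitz A := by
  intro μ hμ
  obtain ⟨v, hv0, hv⟩ := exists_eigenvector hμ
  set Ac := A.map Complex.ofReal with hAc
  set Pc := P.map Complex.ofReal with hPc
  have hPcd : Pc.PosDef := posDef_map hP
  have hp : 0 < star v ⬝ᵥ (Pc *ᵥ v) := hPcd.dotProduct_mulVec_pos hv0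
  have hScd := (posDef_map hS).dotProduct_mulVec_pos hv0
  have hmapS : (-(Aᵀ * P + P * A)).map Complex.ofReal = -((Acᴴ * Pc) + Pc * Ac) := by
    have h1 : (Aᵀ.map Complex.ofReal) = Acᴴ := by
      rw [hAc, ← Matrix.conjTranspose_map Complex.ofReal (fun a => by simp)]
      congr 1
    calc (-(Aᵀ * P + P * A)).map Complex.ofReal
        = -(((Aᵀ * P).map Complex.ofReal) + ((P * A).map Complex.ofReal)) := by
          ext i j; simp [Matrix.map_apply]
      _ = -((Acᴴ * Pc) + Pc * Ac) := by
          rw [show ((Aᵀ * P).map Complex.ofReal) =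
              (Aᵀ.map Complex.ofReal) * Pc from Matrix.map_mul (f := Complex.ofRealHom),
            show ((P * A).map Complex.ofReal) = Pc * Ac from
              Matrix.map_mul (f := Complex.ofRealHom), h1]
  rw [hmapS] at hScd
  have hkey : star v ⬝ᵥ ((-((Acᴴ * Pc) + Pc * Ac)) *ᵥ v)
      = -((star μ + μ) * (star v ⬝ᵥ (Pc *ᵥ v))) := by
    have t2 : star v ⬝ᵥ ((Pc * Ac) *ᵥ v) = μ * (star v ⬝ᵥ (Pc *ᵥ v)) := by
      rw [← Matrix.mulVec_mulVec, hv, Matrix.mulVec_smul, dotProduct_smul, smul_eq_mul]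
    have t1 : star v ⬝ᵥ ((Acᴴ * Pc) *ᵥ v) = star μ * (star v ⬝ᵥ (Pc *ᵥ v)) := by
      rw [← Matrix.mulVec_mulVec, dotProduct_mulVec, ← Matrix.star_mulVec, hv]
      simp [dotProduct_smul, smul_dotProduct, mul_comm]
    rw [neg_mulVec, dotProduct_neg, add_mulVec, dotProduct_add, t1, t2, add_mul]
  rw [hkey] at hScd
  have hμr : star μ + μ = (2 * μ.re : ℝ) := by
    rw [add_comm]; exact_mod_cast Complex.add_conj μ
  rw [hμr] at hScd
  rw [Complex.lt_def] at hp hScd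
  have hpre : 0 < (star v ⬝ᵥ (Pc *ᵥ v)).re := by simpa using hp.1
  have : 0 < (-(((2 * μ.re : ℝ) : ℂ) * (star v ⬝ᵥ (Pc *ᵥ v)))).re := by simpa using hScd.1
  rw [Complex.neg_re, Complex.mul_re, Complex.ofReal_re, Complex.ofReal_im] at this
  simp only [zero_mul, sub_zero] at this
  nlinarith

lemma key_identity {m : ℕ} (A : Matrix (Fin n) (Fin n) ℝ) (B : Matrix (Fin n) (Fin m) ℝ)
    (Q Pk : Matrix (Fin n) (Fin n) ℝ) (R : Matrix (Fin m) (Fin m) ℝ)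
    (Kk K1 : Matrix (Fin m) (Fin n) ℝ)
    (h1 : Bᵀ * Pk = -(R * K1)) (h2 : Pk * B = -(K1ᵀ * R))
    (hlyap' : (A + B * Kk)ᵀ * Pk + Pk * (A + B * Kk) = -(Q + Kkᵀ * R * Kk)) :
    -((A + B * K1)ᵀ * Pk + Pk * (A + B * K1))
      = Q + K1ᵀ * R * K1 + (K1 - Kk)ᵀ * R * (K1 - Kk) := by
  have hA1 : (A + B * K1)ᵀ * Pk + Pk * (A + B * K1)
      = ((A + B * Kk)ᵀ * Pk + Pk * (A + B * Kk))
        + ((K1 - Kk)ᵀ * (Bᵀ * Pk) + (Pk * B) * (K1 - Kk)) := by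
    simp only [transpose_add, transpose_mul, transpose_sub, Matrix.add_mul,
      Matrix.mul_add, Matrix.sub_mul, Matrix.mul_sub, Matrix.mul_assoc]
    abel
  rw [hA1, hlyap', h1, h2]
  simp only [transpose_sub, Matrix.sub_mul, Matrix.mul_sub, Matrix.neg_mul,
    Matrix.mul_neg, Matrix.mul_assoc, neg_neg, neg_sub, neg_add_rev]
  abel

end KleinmanAux

theorem kleinman_step_preserves_hurwitz {n m : ℕ}
    (A : Matrix (Fin n) (Fin n) ℝ) (B : Matrix (Fin n) (Fin m) ℝ)
    (Q Pk : Matrix (Fin n) (Fin n) ℝ) (R : Matrix (Fin m) (Fin m) ℝ)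
    (Kk : Matrix (Fin m) (Fin n) ℝ)
    (hQ : Q.PosDef) (hQs : Q.IsSymm) (hR : R.PosDef) (hRs : R.IsSymm)
    (hAk : IsHurwitz (A + B * Kk))
    (hPks : Pk.IsSymm) (hPk : Pk.PosDef)
    (hlyap : (A + B * Kk)ᵀ * Pk + Pk * (A + B * Kk) + Q + Kkᵀ * R * Kk = 0) :
    IsHurwitz (A + B * (-(R⁻¹ * Bᵀ * Pk))) := by
  set K1 : Matrix (Fin m) (Fin n) ℝ := -(R⁻¹ * Bᵀ * Pk) with hK1
  have hRdet : IsUnit R.det := hR.det_pos.ne'.isUnit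
  have h1 : Bᵀ * Pk = -(R * K1) := by
    have h : R * K1 = -(Bᵀ * Pk) := by
      rw [hK1, Matrix.mul_neg, Matrix.mul_assoc R⁻¹, Matrix.mul_nonsing_inv_cancel_left _ _ hRdet]
    rw [h, neg_neg]
  have h2 : Pk * B = -(K1ᵀ * R) := by
    calc Pk * B = (Bᵀ * Pk)ᵀ := by rw [transpose_mul, transpose_transpose, hPks.eq]
    _ = (-(R * K1))ᵀ := by rw [h1]
    _ = -(K1ᵀ * R) := by rw [transpose_neg, transpose_mul, hRs.eq]
  have hlyap' : (A + B * Kk)ᵀ * Pk + Pk * (A + B * Kk) = -(Q + Kkᵀ * R * Kk) :=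
    eq_neg_of_add_eq_zero_left (by rw [← add_assoc]; exact hlyap)
  have key := KleinmanAux.key_identity A B Q Pk R Kk K1 h1 h2 hlyap'
  have hSpos : (-((A + B * K1)ᵀ * Pk + Pk * (A + B * K1))).PosDef := by
    rw [key]
    have e1 : (K1ᵀ * R * K1).PosSemidef := by
      have := hR.posSemidef.conjTranspose_mul_mul_same K1
      rwa [Matrix.conjTranspose_eq_transpose_of_trivial] at this
    have e2 : ((K1 - Kk)ᵀ * R * (K1 - Kk)).PosSemidef := by
      have := hR.posSemidef.conjTranspose_mul_mul_same (K1 - Kk)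
      rwa [Matrix.conjTranspose_eq_transpose_of_trivial] at this
    exact ((hQ.add_posSemidef e1).add_posSemidef e2)
  exact KleinmanAux.hurwitz_of_lyap hPk hSpos
end

section
/- Let (G₁, G₂) be a minimum p-copy internal model of S, Y = [A, 0; G₂C, G₁], J = [B; G₂D], and K = [K_x, K_z] be such that Y + JK is Hurwitz. Assume S has no eigenvalue with negative real part. Then the regulator equations XS = AX + B(K_xX + K_zZ) + E, ZS = G₁Z + G₂(CX + D(K_xX + K_zZ) + F), 0 = CX + D(K_xX + K_zZ) + F admit a unique solution pair (X, Z). -/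
open Matrix

section Aux
open Polynomial

lemma syl_pow {ι : Type*} [Fintype ι] [DecidableEq ι] {q : ℕ}
    (M : Matrix ι ι ℝ) (S : Matrix (Fin q) (Fin q) ℝ) (W : Matrix ι (Fin q) ℝ)
    (hW : W * S = M * W) (k : ℕ) : W * S ^ k = M ^ k * W := by
  induction k with
  | zero => simp
  | succ k ih =>
    rw [pow_succ, pow_succ, ← Matrix.mul_assoc, ih, Matrix.mul_assoc, hW, ← Matrix.mul_assoc]

lemma syl_aeval {ι : Type*} [Fintype ι] [DecidableEq ι] {q : ℕ}
    (M : Matrix ι ι ℝ) (S : Matrix (Fin q) (Fin q) ℝ) (W : Matrix ι (Fin q) ℝ)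
    (hW : W * S = M * W) (g : ℝ[X]) :
    W * (aeval S g) = (aeval M g) * W := by
  rw [aeval_eq_sum_range (p := g) S, aeval_eq_sum_range (p := g) M,
    Matrix.mul_sum, Matrix.sum_mul]
  refine Finset.sum_congr rfl fun k _ => ?_
  rw [Matrix.mul_smul, Matrix.smul_mul, syl_pow M S W hW]

lemma sylvester_unique {ι : Type*} [Fintype ι] [DecidableEq ι] {q : ℕ}
    (M : Matrix ι ι ℝ) (S : Matrix (Fin q) (Fin q) ℝ)
    (hunit : IsUnit (aeval S M.charpoly))
    (L : Matrix ι (Fin q) ℝ) :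
    ∃! W : Matrix ι (Fin q) ℝ, W * S = M * W + L := by
  let Φ : Matrix ι (Fin q) ℝ →ₗ[ℝ] Matrix ι (Fin q) ℝ :=
    { toFun := fun W => W * S - M * W
      map_add' := by intro W V; simp [Matrix.add_mul, Matrix.mul_add]; abel
      map_smul' := by intro c W; simp [Matrix.smul_mul, Matrix.mul_smul, smul_sub] }
  have hinj : Function.Injective Φ := by
    rw [← LinearMap.ker_eq_bot, LinearMap.ker_eq_bot']
    intro W hW0
    have hW : W * S = M * W := by
      have h : W * S - M * W = 0 := hW0
      rw [sub_eq_zero] at h; exact h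
    have h2 : W * (aeval S M.charpoly) = 0 := by
      rw [syl_aeval M S W hW, Matrix.aeval_self_charpoly, Matrix.zero_mul]
    obtain ⟨V, hV⟩ := hunit.exists_right_inv
    calc W = W * ((aeval S M.charpoly) * V) := by rw [hV, Matrix.mul_one]
    _ = (W * aeval S M.charpoly) * V := by rw [Matrix.mul_assoc]
    _ = 0 := by rw [h2, Matrix.zero_mul]
  have hsurj : Function.Surjective Φ := LinearMap.injective_iff_surjective.mp hinj
  obtain ⟨W, hWeq⟩ := hsurj L
  refine ⟨W, ?_, fun W' hW' => ?_⟩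
  · have : W * S - M * W = L := hWeq
    rw [sub_eq_iff_eq_add'] at this
    exact this
  · apply hinj
    show W' * S - M * W' = W * S - M * W
    have : W * S - M * W = L := hWeq
    rw [this, hW']; abel

lemma mem_spectrum_of_root {ι : Type*} [Fintype ι] [DecidableEq ι]
    (Mc : Matrix ι ι ℂ) (μ : ℂ) (h : eval μ Mc.charpoly = 0) :
    μ ∈ spectrum ℂ Mc := by
  rw [spectrum.mem_iff, Matrix.isUnit_iff_isUnit_det, isUnit_iff_ne_zero, not_not]
  have key : (charmatrix Mc).map (evalRingHom μ) = algebraMap ℂ (Matrix ι ι ℂ) μ - Mc := by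
    ext i j
    by_cases hij : i = j <;>
      simp [charmatrix_apply, Matrix.map_apply, Matrix.diagonal_apply, hij,
        Matrix.algebraMap_eq_diagonal, Matrix.sub_apply]
  have h2 : (evalRingHom μ) (Matrix.charpoly Mc) = ((charmatrix Mc).map (evalRingHom μ)).det :=
    RingHom.map_det (evalRingHom μ) (charmatrix Mc)
  rw [key] at h2
  rw [← h2]
  exact h

lemma hurwitz_aeval_unit {ι : Type*} [Fintype ι] [DecidableEq ι] {q : ℕ}
    (M : Matrix ι ι ℝ) (S : Matrix (Fin q) (Fin q) ℝ)
    (hM : ∀ μ ∈ spectrum ℂ (M.map Complex.ofReal), μ.re < 0)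
    (hS : ∀ μ ∈ spectrum ℂ (S.map Complex.ofReal), 0 ≤ μ.re) :
    IsUnit (aeval S M.charpoly) := by
  set f := M.charpoly with hf
  set Sc := S.map Complex.ofReal with hSc
  set fC := f.map (algebraMap ℝ ℂ) with hfC
  have hCunit : IsUnit (aeval Sc fC) := by
    by_cases hdeg : 0 < fC.degree
    · rw [← spectrum.zero_notMem_iff ℂ]
      intro h0
      rw [spectrum.map_polynomial_aeval_of_degree_pos Sc fC hdeg] at h0
      obtain ⟨lam, hlmem, hleval⟩ := h0
      have hroot : eval lam (Matrix.charpoly (M.map Complex.ofReal)) = 0 := by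
        show eval lam (Matrix.charpoly (M.map ⇑Complex.ofRealHom)) = 0
        rw [Matrix.charpoly_map]
        exact hleval
      have h1 := hM lam (mem_spectrum_of_root _ _ hroot)
      have h2 := hS lam hlmem
      linarith
    · have hmonic : fC.Monic := (Matrix.charpoly_monic M).map _
      have h1 : fC = 1 := hmonic.natDegree_eq_zero.mp
        (natDegree_eq_zero_iff_degree_le_zero.mpr (le_of_not_gt hdeg))
      rw [h1, _root_.map_one]
      exact isUnit_one
  -- transfer back to ℝ
  have h1 : aeval Sc fC = (aeval S f).map Complex.ofReal := by
    rw [hfC, aeval_map_algebraMap]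
    have h2 := Polynomial.aeval_algHom_apply
      ((Algebra.ofId ℝ ℂ).mapMatrix (m := Fin q)) S f
    have h3 : (Algebra.ofId ℝ ℂ).mapMatrix (m := Fin q) S = Sc := by
      ext i j; rfl
    rw [h3] at h2
    rw [h2]
    rfl
  rw [Matrix.isUnit_iff_isUnit_det, isUnit_iff_ne_zero]
  intro h0
  rw [Matrix.isUnit_iff_isUnit_det, isUnit_iff_ne_zero, h1] at hCunit
  apply hCunit
  have h4 : ((aeval S f).map Complex.ofReal).det = Complex.ofRealHom (aeval S f).det :=
    (RingHom.map_det Complex.ofRealHom _).symm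
  rw [h4, h0]
  simp

lemma internal_model {q r : ℕ} (S : Matrix (Fin q) (Fin q) ℝ)
    (β : Matrix (Fin r) (Fin r) ℝ) (σv : Fin r → ℝ)
    (hβ : β.charpoly = minpoly ℝ S)
    (hctrb : (Matrix.of fun (a : Fin r) (b : Fin r) => (β ^ (b : ℕ)).mulVec σv a).rank = r)
    (Z : Matrix (Fin r) (Fin q) ℝ) (w : Fin q → ℝ)
    (hZ : Z * S = β * Z + Matrix.vecMulVec σv w) : w = 0 := by
  rcases Nat.eq_zero_or_pos q with hq | hq
  · subst hq; funext t; exact t.elim0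
  set m : ℝ[X] := minpoly ℝ S with hm
  have hm0 : aeval S m = 0 := minpoly.aeval ℝ S
  have hβ0 : aeval β m = 0 := by rw [← hβ]; exact Matrix.aeval_self_charpoly β
  have hmonic : m.Monic := by rw [← hβ]; exact Matrix.charpoly_monic β
  have hdeg : m.natDegree = r := by
    rw [← hβ, Matrix.charpoly_natDegree_eq_dim, Fintype.card_fin]
  have hr : 0 < r := by
    rcases Nat.eq_zero_or_pos r with hr0 | hr0
    · exfalso
      have h1 : m = 1 := hmonic.natDegree_eq_zero.mp (by omega)
      rw [h1, _root_.map_one] at hm0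
      have := congrFun (congrFun hm0 ⟨0, hq⟩) ⟨0, hq⟩
      simp [Matrix.one_apply] at this
    · exact hr0
  set P : Matrix (Fin r) (Fin q) ℝ := Matrix.vecMulVec σv w with hP
  -- power identity
  have hpow : ∀ k : ℕ, Z * S ^ k =
      β ^ k * Z + ∑ j ∈ Finset.range k, β ^ j * P * S ^ (k - 1 - j) := by
    intro k
    induction k with
    | zero => simp
    | succ k ih =>
      rw [pow_succ, ← Matrix.mul_assoc, ih, Matrix.add_mul, Matrix.mul_assoc (β ^ k) Z S,
        hZ, Matrix.sum_mul, Finset.sum_range_succ]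
      have hterm : ∀ j ∈ Finset.range k,
          β ^ j * P * S ^ (k - 1 - j) * S = β ^ j * P * S ^ (k - j) := by
        intro j hj
        rw [Finset.mem_range] at hj
        rw [Matrix.mul_assoc, ← pow_succ]
        congr 2
        omega
      rw [Finset.sum_congr rfl hterm, Matrix.mul_add]
      simp only [Nat.add_sub_cancel, Nat.sub_self, pow_zero, Matrix.mul_one, pow_succ]
      rw [← Matrix.mul_assoc]
      abel
  -- double sum identity
  have hdbl : ∑ k ∈ Finset.range (r + 1), m.coeff k •
      ∑ j ∈ Finset.range k, β ^ j * P * S ^ (k - 1 - j) = 0 := by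
    have h1 : Z * aeval S m = 0 := by rw [hm0, Matrix.mul_zero]
    rw [aeval_eq_sum_range (p := m) S, hdeg, Matrix.mul_sum] at h1
    have h2 : ∀ k ∈ Finset.range (r + 1),
        Z * (m.coeff k • S ^ k) = m.coeff k • (β ^ k * Z)
          + m.coeff k • ∑ j ∈ Finset.range k, β ^ j * P * S ^ (k - 1 - j) := by
      intro k _
      rw [Matrix.mul_smul, hpow k, smul_add]
    rw [Finset.sum_congr rfl h2, Finset.sum_add_distrib] at h1
    have h3 : ∑ k ∈ Finset.range (r + 1), m.coeff k • (β ^ k * Z) = 0 := by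
      have : ∑ k ∈ Finset.range (r + 1), m.coeff k • (β ^ k * Z)
          = (∑ k ∈ Finset.range (r + 1), m.coeff k • β ^ k) * Z := by
        rw [Matrix.sum_mul]
        exact Finset.sum_congr rfl fun k _ => (Matrix.smul_mul _ _ _).symm
      have h4 : aeval β m = ∑ k ∈ Finset.range (r + 1), m.coeff k • β ^ k := by
        rw [aeval_eq_sum_range (p := m) β, hdeg]
      rw [this, ← h4, hβ0, Matrix.zero_mul]
    rw [h3, zero_add] at h1
    exact h1
  -- swap the double sum
  set T : ℕ → Matrix (Fin q) (Fin q) ℝ :=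
    fun j => ∑ k ∈ (Finset.range (r + 1)).filter (fun k => j < k),
      m.coeff k • S ^ (k - 1 - j) with hT
  have hswap : ∑ j ∈ Finset.range (r + 1), β ^ j * (P * T j) = 0 := by
    rw [← hdbl]
    symm
    calc ∑ k ∈ Finset.range (r + 1), m.coeff k •
          ∑ j ∈ Finset.range k, β ^ j * P * S ^ (k - 1 - j)
        = ∑ k ∈ Finset.range (r + 1), ∑ j ∈ Finset.range (r + 1),
            if j < k then m.coeff k • (β ^ j * P * S ^ (k - 1 - j)) else 0 := by
          refine Finset.sum_congr rfl fun k hk => ?_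
          rw [Finset.mem_range] at hk
          rw [Finset.smul_sum]
          have hfk : (Finset.range (r + 1)).filter (fun j => j < k) = Finset.range k := by
            ext j; simp only [Finset.mem_filter, Finset.mem_range]; omega
          rw [← hfk, Finset.sum_filter]
      _ = ∑ j ∈ Finset.range (r + 1), ∑ k ∈ Finset.range (r + 1),
            if j < k then m.coeff k • (β ^ j * P * S ^ (k - 1 - j)) else 0 :=
          Finset.sum_comm
      _ = ∑ j ∈ Finset.range (r + 1), β ^ j * (P * T j) := by
          refine Finset.sum_congr rfl fun j hj => ?_
          rw [← Finset.sum_filter, hT]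
          simp only [Matrix.mul_sum, Matrix.mul_smul, Matrix.mul_assoc]
  have hterm : ∀ j : ℕ, β ^ j * (P * T j)
      = Matrix.vecMulVec ((β ^ j).mulVec σv) (Matrix.vecMul w (T j)) := by
    intro j
    ext a t
    simp only [Matrix.mul_apply, Matrix.vecMulVec_apply, Matrix.mulVec, Matrix.vecMul,
      dotProduct, hP, Finset.sum_mul, Finset.mul_sum]
    rw [Finset.sum_comm]
    exact Finset.sum_congr rfl fun x _ => Finset.sum_congr rfl fun i _ => by ring
  have hsum2 : ∑ j ∈ Finset.range (r + 1),
      Matrix.vecMulVec ((β ^ j).mulVec σv) (Matrix.vecMul w (T j)) = 0 := by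
    rw [← hswap]
    exact Finset.sum_congr rfl fun j _ => (hterm j).symm
  -- T r = 0
  have hTr : T r = 0 := by
    rw [hT]
    dsimp only
    have : (Finset.range (r + 1)).filter (fun k => r < k) = ∅ := by
      ext k; simp only [Finset.mem_filter, Finset.mem_range, Finset.notMem_empty,
        iff_false, not_and]; omega
    rw [this, Finset.sum_empty]
  -- controllability matrix times U is zero
  set Ct : Matrix (Fin r) (Fin r) ℝ :=
    Matrix.of (fun (a : Fin r) (b : Fin r) => (β ^ (b : ℕ)).mulVec σv a) with hCt
  set U : Matrix (Fin r) (Fin q) ℝ :=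
    Matrix.of (fun (j : Fin r) t => Matrix.vecMul w (T (j : ℕ)) t) with hU
  have hCU : Ct * U = 0 := by
    ext a t
    have h5 : ∑ j ∈ Finset.range (r + 1),
        ((β ^ j).mulVec σv a) * (Matrix.vecMul w (T j) t) = 0 := by
      have h6 := congrFun (congrFun hsum2 a) t
      simpa [Matrix.sum_apply, Matrix.vecMulVec_apply] using h6
    rw [Finset.sum_range_succ, hTr] at h5
    simp only [Matrix.vecMul_zero, Pi.zero_apply, mul_zero, add_zero] at h5
    rw [Finset.sum_range] at h5
    simpa [Matrix.mul_apply, hCt, hU] using h5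
  -- Ct is invertible as a linear map
  have hrange : LinearMap.range Ct.mulVecLin = ⊤ := by
    apply Submodule.eq_top_of_finrank_eq
    have : Ct.rank = r := hctrb
    rw [Matrix.rank] at this
    rw [this, Module.finrank_pi]
    simp
  have hinj : Function.Injective Ct.mulVecLin :=
    LinearMap.injective_iff_surjective.mpr (LinearMap.range_eq_top.mp hrange)
  have hU0 : U = 0 := by
    ext j t
    have hcol : Ct.mulVecLin (fun j => U j t) = 0 := by
      funext a
      have := congrFun (congrFun hCU a) t
      simpa [Matrix.mulVecLin_apply, Matrix.mulVec, dotProduct, Matrix.mul_apply]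
        using this
    have := hinj (hcol.trans (map_zero Ct.mulVecLin).symm)
    exact congrFun this j
  -- T (r - 1) = 1
  have hTlast : T (r - 1) = 1 := by
    rw [hT]
    dsimp only
    have hfs : (Finset.range (r + 1)).filter (fun k => r - 1 < k) = {r} := by
      ext k; simp only [Finset.mem_filter, Finset.mem_range, Finset.mem_singleton]; omega
    rw [hfs, Finset.sum_singleton]
    have hc : m.coeff r = 1 := by
      rw [← hdeg]; exact hmonic.coeff_natDegree
    have he : r - 1 - (r - 1) = 0 := by omega
    rw [hc, he, pow_zero, one_smul]
  funext t
  have h6 : w t = U ⟨r - 1, by omega⟩ t := by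
    rw [hU]
    show w t = Matrix.vecMul w (T (r - 1)) t
    rw [hTlast, Matrix.vecMul_one]
  rw [h6, hU0]
  rfl

end Aux

theorem regulator_equations_unique_solution {n m p q r : ℕ}
    (A : Matrix (Fin n) (Fin n) ℝ) (B : Matrix (Fin n) (Fin m) ℝ)
    (C : Matrix (Fin p) (Fin n) ℝ) (D : Matrix (Fin p) (Fin m) ℝ)
    (E : Matrix (Fin n) (Fin q) ℝ) (F : Matrix (Fin p) (Fin q) ℝ)
    (S : Matrix (Fin q) (Fin q) ℝ)
    (β : Matrix (Fin r) (Fin r) ℝ) (σv : Fin r → ℝ)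
    (Kx : Matrix (Fin m) (Fin n) ℝ) (Kz : Matrix (Fin m) (Fin p × Fin r) ℝ)
    -- (G₁, G₂) is a minimum p-copy internal model of S
    (G₁ : Matrix (Fin p × Fin r) (Fin p × Fin r) ℝ)
    (G₂ : Matrix (Fin p × Fin r) (Fin p) ℝ)
    (hG₁ : G₁ = fun x y => if x.1 = y.1 then β x.2 y.2 else 0)
    (hG₂ : G₂ = fun x j => if x.1 = j then σv x.2 else 0)
    (hβ : β.charpoly = minpoly ℝ S)
    (hctrb : (Matrix.of fun (a : Fin r) (b : Fin r) => (β ^ (b : ℕ)).mulVec σv a).rank = r)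
    -- S has no eigenvalue with negative real part
    (hS : ∀ μ ∈ spectrum ℂ (S.map Complex.ofReal), 0 ≤ μ.re)
    -- Y + J K is Hurwitz, with K = [K_x, K_z]
    (hHur : IsHurwitz (Matrix.fromBlocks A 0 (G₂ * C) G₁ +
      Matrix.fromRows B (G₂ * D) * Matrix.fromCols Kx Kz)) :
    ∃! XZ : Matrix (Fin n) (Fin q) ℝ × Matrix (Fin p × Fin r) (Fin q) ℝ,
      XZ.1 * S = A * XZ.1 + B * (Kx * XZ.1 + Kz * XZ.2) + E ∧
      XZ.2 * S = G₁ * XZ.2 + G₂ * (C * XZ.1 + D * (Kx * XZ.1 + Kz * XZ.2) + F) ∧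
      0 = C * XZ.1 + D * (Kx * XZ.1 + Kz * XZ.2) + F := by
  classical
  set M : Matrix (Fin n ⊕ Fin p × Fin r) (Fin n ⊕ Fin p × Fin r) ℝ :=
    fromBlocks (A + B * Kx) (B * Kz) (G₂ * C + G₂ * D * Kx) (G₁ + G₂ * D * Kz) with hM
  have hMeq : Matrix.fromBlocks A 0 (G₂ * C) G₁ +
      Matrix.fromRows B (G₂ * D) * Matrix.fromCols Kx Kz = M := by
    rw [fromRows_mul_fromCols, hM]
    ext (i | i) (j | j) <;>
      simp [Matrix.add_apply, Matrix.mul_assoc]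
  rw [hMeq] at hHur
  have hunit := hurwitz_aeval_unit M S hHur hS
  obtain ⟨W, hW, hWu⟩ := sylvester_unique M S hunit (fromRows E (G₂ * F))
  have hchar : ∀ (X : Matrix (Fin n) (Fin q) ℝ) (Z : Matrix (Fin p × Fin r) (Fin q) ℝ),
      (fromRows X Z * S = M * fromRows X Z + fromRows E (G₂ * F)) ↔
      (X * S = A * X + B * (Kx * X + Kz * Z) + E ∧
       Z * S = G₁ * Z + G₂ * (C * X + D * (Kx * X + Kz * Z) + F)) := by
    intro X Z
    have hadd : ∀ (U₁ : Matrix (Fin n) (Fin q) ℝ) (U₂ : Matrix (Fin p × Fin r) (Fin q) ℝ),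
        fromRows U₁ U₂ + fromRows E (G₂ * F) = fromRows (U₁ + E) (U₂ + G₂ * F) := by
      intro U₁ U₂; ext (i | i) j <;> simp
    rw [fromRows_mul, hM, fromBlocks_mul_fromRows, hadd, fromRows_ext_iff]
    have hrw1 : (A + B * Kx) * X + B * Kz * Z + E = A * X + B * (Kx * X + Kz * Z) + E := by
      rw [Matrix.add_mul, Matrix.mul_add, Matrix.mul_assoc, Matrix.mul_assoc]
      abel
    have hrw2 : (G₂ * C + G₂ * D * Kx) * X + (G₁ + G₂ * D * Kz) * Z + G₂ * F
        = G₁ * Z + G₂ * (C * X + D * (Kx * X + Kz * Z) + F) := by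
      simp only [Matrix.add_mul, Matrix.mul_add, Matrix.mul_assoc]
      abel
    rw [hrw1, hrw2]
  set X : Matrix (Fin n) (Fin q) ℝ := Matrix.of (fun i t => W (Sum.inl i) t) with hX
  set Z : Matrix (Fin p × Fin r) (Fin q) ℝ := Matrix.of (fun x t => W (Sum.inr x) t) with hZ
  have hWXZ : fromRows X Z = W := by ext (i | i) t <;> rfl
  have h12 := (hchar X Z).mp (by rw [hWXZ]; exact hW)
  obtain ⟨h1, h2⟩ := h12
  -- the regulation error vanishes
  set e : Matrix (Fin p) (Fin q) ℝ := C * X + D * (Kx * X + Kz * Z) + F with he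
  have he0 : e = 0 := by
    ext i t
    have hrow : (Matrix.of fun (a : Fin r) t => Z (i, a) t) * S
        = β * (Matrix.of fun (a : Fin r) t => Z (i, a) t)
          + Matrix.vecMulVec σv (fun t => e i t) := by
      ext a s
      have h7 := congrFun (congrFun h2 (i, a)) s
      have hL : ((Matrix.of fun (a : Fin r) t => Z (i, a) t) * S) a s = (Z * S) (i, a) s := by
        simp [Matrix.mul_apply]
      have hG1Z : (G₁ * Z) (i, a) s
          = (β * (Matrix.of fun (a : Fin r) t => Z (i, a) t)) a s := by
        simp only [Matrix.mul_apply]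
        simp only [hG₁]
        rw [Fintype.sum_prod_type]
        have hy : ∀ y1 : Fin p, ∑ y2 : Fin r,
            (if i = y1 then β a y2 else 0) * Z (y1, y2) s
            = if i = y1 then ∑ y2 : Fin r, β a y2 * Z (i, y2) s else 0 := by
          intro y1
          by_cases hiy : i = y1
          · subst hiy; simp
          · simp [hiy]
        rw [Finset.sum_congr rfl fun y1 _ => hy y1, Finset.sum_ite_eq]
        simp
      have hG2e : (G₂ * e) (i, a) s = σv a * e i s := by
        simp only [Matrix.mul_apply]
        simp [hG₂, ite_mul, Finset.sum_ite_eq]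
      rw [hL, h7, Matrix.add_apply, hG1Z, hG2e, Matrix.add_apply, Matrix.vecMulVec_apply]
    have h8 := congrFun (internal_model S β σv hβ hctrb _ _ hrow) t
    simpa using h8
  refine ⟨(X, Z), ⟨h1, h2, he0.symm⟩, ?_⟩
  rintro ⟨X', Z'⟩ ⟨h1', h2', _⟩
  have heq := hWu (fromRows X' Z') ((hchar X' Z').mpr ⟨h1', h2'⟩)
  rw [← hWXZ] at heq
  obtain ⟨hXe, hZe⟩ := (fromRows_ext_iff X' Z' X Z).mp heq
  exact Prod.ext hXe hZe
end

section
/- Let ξ satisfy ξ̇ = (A + BK)ξ − B(Kξ − u) = Aξ + Bu, let K' = −R⁻¹BᵀP where P is symmetric, and suppose (A+BK)ᵀP + P(A+BK) + Q + KᵀRK = 0. Then for all t, δt > 0: ξ(t+δt)ᵀPξ(t+δt) − ξ(t)ᵀPξ(t) = ∫_t^{t+δt} [−ξᵀ(Q + KᵀRK)ξ + 2ξᵀKᵀRK'ξ − 2uᵀRK'ξ] dτ. -/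
open Matrix intervalIntegral

theorem pi_integral_identity {n m : ℕ}
    (A : Matrix (Fin n) (Fin n) ℝ) (B : Matrix (Fin n) (Fin m) ℝ)
    (K K' : Matrix (Fin m) (Fin n) ℝ)
    (P Q : Matrix (Fin n) (Fin n) ℝ) (R : Matrix (Fin m) (Fin m) ℝ)
    (hPs : P.IsSymm) (hQ : Q.PosSemidef) (hR : R.PosDef) (hRs : R.IsSymm)
    (hK' : K' = -(R⁻¹ * Bᵀ * P))
    (hlyap : (A + B * K)ᵀ * P + P * (A + B * K) + Q + Kᵀ * R * K = 0)
    (ξ : ℝ → Fin n → ℝ) (u : ℝ → Fin m → ℝ)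
    (hu : Continuous u)
    (hξ : ∀ t, HasDerivAt ξ (A.mulVec (ξ t) + B.mulVec (u t)) t) :
    ∀ t : ℝ, ∀ δt : ℝ, 0 < δt →
      ξ (t + δt) ⬝ᵥ P.mulVec (ξ (t + δt)) - ξ t ⬝ᵥ P.mulVec (ξ t) =
        ∫ τ in t..(t + δt),
          (-(ξ τ ⬝ᵥ (Q + Kᵀ * R * K).mulVec (ξ τ)) +
            2 * (ξ τ ⬝ᵥ (Kᵀ * R * K').mulVec (ξ τ)) -
            2 * (u τ ⬝ᵥ (R * K').mulVec (ξ τ))) := by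
  intro t δt hδ
  -- ξ is continuous
  have hξc : Continuous ξ :=
    continuous_iff_continuousAt.mpr fun τ => (hξ τ).continuousAt
  have hdet : IsUnit R.det := isUnit_iff_ne_zero.mpr (ne_of_gt hR.det_pos)
  have hRK' : R * K' = -(Bᵀ * P) := by
    rw [hK', Matrix.mul_neg, ← Matrix.mul_assoc, ← Matrix.mul_assoc,
      Matrix.mul_nonsing_inv _ hdet, Matrix.one_mul]
  have h1 : Q + Kᵀ * R * K = -((A + B * K)ᵀ * P + P * (A + B * K)) := by
    have h := hlyap
    rw [add_assoc ((A + B * K)ᵀ * P + P * (A + B * K))] at h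
    exact eq_neg_of_add_eq_zero_right h
  -- symmetry of P under dot products
  have hsymm : ∀ (v w : Fin n → ℝ), v ⬝ᵥ P.mulVec w = w ⬝ᵥ P.mulVec v := by
    intro v w
    rw [Matrix.dotProduct_mulVec, ← Matrix.mulVec_transpose, hPs.eq, dotProduct_comm]
  -- transpose lemma
  have htr : ∀ {k : ℕ} (M : Matrix (Fin n) (Fin k) ℝ) (v : Fin k → ℝ) (w : Fin n → ℝ),
      v ⬝ᵥ (Mᵀ * P).mulVec w = (M.mulVec v) ⬝ᵥ P.mulVec w := by
    intro k M v w
    rw [← Matrix.mulVec_mulVec, Matrix.dotProduct_mulVec, Matrix.vecMul_transpose]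
  -- key pointwise derivative identity
  have key : ∀ (a : Fin n → ℝ) (b : Fin m → ℝ),
      (A.mulVec a + B.mulVec b) ⬝ᵥ P.mulVec a + a ⬝ᵥ P.mulVec (A.mulVec a + B.mulVec b) =
        -(a ⬝ᵥ (Q + Kᵀ * R * K).mulVec a) + 2 * (a ⬝ᵥ (Kᵀ * R * K').mulVec a) -
          2 * (b ⬝ᵥ (R * K').mulVec a) := by
    intro a b
    have e2 : Kᵀ * R * K' = -((B * K)ᵀ * P) := by
      rw [Matrix.mul_assoc, hRK', Matrix.transpose_mul, Matrix.mul_neg, Matrix.mul_assoc]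
    have e3 : R * K' = -(Bᵀ * P) := hRK'
    rw [h1, e2, e3]
    have hA : a ⬝ᵥ ((A + B * K)ᵀ * P).mulVec a = ((A + B * K).mulVec a) ⬝ᵥ P.mulVec a :=
      htr (A + B * K) a a
    have hBK : a ⬝ᵥ ((B * K)ᵀ * P).mulVec a = ((B * K).mulVec a) ⬝ᵥ P.mulVec a :=
      htr (B * K) a a
    have hB : b ⬝ᵥ (Bᵀ * P).mulVec a = (B.mulVec b) ⬝ᵥ P.mulVec a := htr B b a
    have hPA : a ⬝ᵥ (P * (A + B * K)).mulVec a = ((A + B * K).mulVec a) ⬝ᵥ P.mulVec a := by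
      rw [← Matrix.mulVec_mulVec, hsymm]
    simp only [Matrix.neg_mulVec, Matrix.add_mulVec, dotProduct_neg, dotProduct_add,
      add_dotProduct, Matrix.mulVec_add, hA, hBK, hB, hPA]
    rw [hsymm a (A.mulVec a), hsymm a (B.mulVec b)]
    ring
  -- derivative of V
  set f : ℝ → ℝ := fun τ =>
    -(ξ τ ⬝ᵥ (Q + Kᵀ * R * K).mulVec (ξ τ)) + 2 * (ξ τ ⬝ᵥ (Kᵀ * R * K').mulVec (ξ τ)) -
      2 * (u τ ⬝ᵥ (R * K').mulVec (ξ τ)) with hf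
  have hV : ∀ τ, HasDerivAt (fun s => ξ s ⬝ᵥ P.mulVec (ξ s)) (f τ) τ := by
    intro τ
    have hξi : ∀ i, HasDerivAt (fun s => ξ s i)
        ((A.mulVec (ξ τ) + B.mulVec (u τ)) i) τ := fun i => hasDerivAt_pi.mp (hξ τ) i
    set d : Fin n → ℝ := A.mulVec (ξ τ) + B.mulVec (u τ) with hd
    have h0 : HasDerivAt (fun s => ∑ i, ξ s i * ∑ j, P i j * ξ s j)
        (∑ i, (d i * ∑ j, P i j * ξ τ j + ξ τ i * ∑ j, P i j * d j)) τ := by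
      apply HasDerivAt.fun_sum
      intro i _
      exact (hξi i).mul (HasDerivAt.fun_sum fun j _ => (hξi j).const_mul (P i j))
    have hfun : (fun s => ξ s ⬝ᵥ P.mulVec (ξ s)) = fun s => ∑ i, ξ s i * ∑ j, P i j * ξ s j := by
      funext s; simp [dotProduct, Matrix.mulVec]
    have hval : (∑ i, (d i * ∑ j, P i j * ξ τ j + ξ τ i * ∑ j, P i j * d j)) =
        d ⬝ᵥ P.mulVec (ξ τ) + ξ τ ⬝ᵥ P.mulVec d := by
      simp [dotProduct, Matrix.mulVec, Finset.sum_add_distrib]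
    rw [hfun]
    have := h0
    rw [hval] at this
    have hkey := key (ξ τ) (u τ)
    rw [hf]
    convert this using 1
    rw [hd]
    simpa using hkey.symm
  -- continuity of f
  have hdc : ∀ {k l : ℕ} (M : Matrix (Fin k) (Fin l) ℝ) (v : ℝ → Fin k → ℝ)
      (w : ℝ → Fin l → ℝ), Continuous v → Continuous w →
      Continuous (fun τ => v τ ⬝ᵥ M.mulVec (w τ)) := by
    intro k l M v w hv hw
    simp only [dotProduct, Matrix.mulVec]
    refine continuous_finset_sum _ fun i _ => ?_
    exact ((continuous_apply i).comp hv).mul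
      (continuous_finset_sum _ fun j _ => continuous_const.mul ((continuous_apply j).comp hw))
  have hfc : Continuous f := by
    rw [hf]
    exact Continuous.sub
      (Continuous.add (Continuous.neg (hdc _ _ _ hξc hξc))
        (continuous_const.mul (hdc _ _ _ hξc hξc)))
      (continuous_const.mul (hdc _ _ _ hu hξc))
  rw [intervalIntegral.integral_eq_sub_of_hasDerivAt
    (fun x _ => hV x) (hfc.intervalIntegrable t (t + δt))]
end

section
/- Let β ∈ ℝ^{r×r} have characteristic polynomial equal to the minimal polynomial of S ∈ ℝ^{q×q}, and let σ ∈ ℝ^r be such that (β, σ) is controllable. Then for every eigenvalue λ of S, λ is an eigenvalue of β, and the pair (G₁, G₂) with G₁ = blockdiag(β,…,β) (p copies) and G₂ = blockdiag(σ,…,σ) (p copies) satisfies: for every λ ∈ σ(S), rank(G₁ − λI) = pr − p and the matrix [G₁ − λI, G₂] ∈ ℝ^{pr×(pr+p)} has full row rank pr. -/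
open Matrix Polynomial

namespace IMAux

noncomputable section

/-- Evaluating the characteristic polynomial gives the determinant of `μ•1 - M`. -/
lemma eval_charpoly {n : ℕ} (M : Matrix (Fin n) (Fin n) ℂ) (μ : ℂ) :
    M.charpoly.eval μ = (μ • (1 : Matrix (Fin n) (Fin n) ℂ) - M).det := by
  have h : (charmatrix M).map (Polynomial.eval μ) = μ • (1 : Matrix (Fin n) (Fin n) ℂ) - M := by
    ext i j
    by_cases hij : i = j
    · subst hij
      simp [charmatrix_apply_eq, Matrix.one_apply]
    · simp [charmatrix_apply_ne _ _ _ hij, Matrix.one_apply, hij]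
  rw [← h, Matrix.charpoly]
  exact RingHom.map_det (Polynomial.evalRingHom μ) (charmatrix M)

lemma mem_spectrum_iff_isRoot {n : ℕ} (M : Matrix (Fin n) (Fin n) ℂ) (μ : ℂ) :
    μ ∈ spectrum ℂ M ↔ M.charpoly.IsRoot μ := by
  rw [spectrum.mem_iff, Algebra.algebraMap_eq_smul_one, Matrix.isUnit_iff_isUnit_det,
    isUnit_iff_ne_zero, not_ne_iff, Polynomial.IsRoot, eval_charpoly]

lemma isRoot_minpoly_of_mem_spectrum {n : ℕ} (M : Matrix (Fin n) (Fin n) ℂ) {μ : ℂ}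
    (h : μ ∈ spectrum ℂ M) : (minpoly ℂ M).IsRoot μ := by
  have h' : μ ∈ spectrum ℂ (Matrix.toLinAlgEquiv' M : Module.End ℂ (Fin n → ℂ)) := by
    rwa [AlgEquiv.spectrum_eq Matrix.toLinAlgEquiv' M]
  have he : Module.End.HasEigenvalue (Matrix.toLinAlgEquiv' M : Module.End ℂ (Fin n → ℂ)) μ :=
    Module.End.hasEigenvalue_iff_mem_spectrum.mpr h'
  have hr := Module.End.hasEigenvalue_iff_isRoot.mp he
  rwa [minpoly.algEquiv_eq] at hr

lemma vecMul_pow {r : ℕ} {B : Matrix (Fin r) (Fin r) ℂ} {μ : ℂ} {w : Fin r → ℂ}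
    (h : w ᵥ* B = μ • w) (k : ℕ) : w ᵥ* (B ^ k) = (μ ^ k) • w := by
  induction k with
  | zero => simp [Matrix.vecMul_one]
  | succ k ih =>
      rw [pow_succ, ← Matrix.vecMul_vecMul, ih, Matrix.smul_vecMul, h, smul_smul, ← pow_succ]

lemma vecMul_smul_mat {k : ℕ} (M : Matrix (Fin k) (Fin k) ℂ) (c : ℂ) (w : Fin k → ℂ) :
    w ᵥ* (c • M) = c • (w ᵥ* M) := by
  funext j
  simp [Matrix.vecMul, dotProduct, Finset.mul_sum, mul_left_comm]

/-- PBH-type lemma: a left eigenvector orthogonal to `s` must vanish, when the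
controllability matrix is invertible. -/
lemma pbh_zero {r : ℕ} {B : Matrix (Fin r) (Fin r) ℂ} {s : Fin r → ℂ}
    (hK : (Matrix.of fun a b : Fin r => ((B ^ (b : ℕ)) *ᵥ s) a).det ≠ 0)
    {μ : ℂ} {w : Fin r → ℂ} (h1 : w ᵥ* B = μ • w) (h2 : w ⬝ᵥ s = 0) : w = 0 := by
  set K := Matrix.of fun a b : Fin r => ((B ^ (b : ℕ)) *ᵥ s) a with hKdef
  have hKw : w ᵥ* K = 0 := by
    funext b
    have hb : (w ᵥ* K) b = w ⬝ᵥ ((B ^ (b : ℕ)) *ᵥ s) := rfl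
    rw [hb, Matrix.dotProduct_mulVec, vecMul_pow h1, smul_dotProduct, h2, smul_zero]
    rfl
  calc w = w ᵥ* (K * K⁻¹) := by
            rw [Matrix.mul_nonsing_inv _ (isUnit_iff_ne_zero.mpr hK), Matrix.vecMul_one]
    _ = (w ᵥ* K) ᵥ* K⁻¹ := (Matrix.vecMul_vecMul _ _ _).symm
    _ = 0 := by rw [hKw, Matrix.zero_vecMul]

lemma rank_add_finrank_leftker {m l : Type*} [Fintype m] [Fintype l]
    [DecidableEq m] [DecidableEq l] (M : Matrix m l ℂ) :
    M.rank + Module.finrank ℂ (LinearMap.ker M.vecMulLinear) = Fintype.card m := by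
  rw [← Matrix.rank_transpose, Matrix.rank, Matrix.mulVecLin_transpose,
    LinearMap.finrank_range_add_finrank_ker, Module.finrank_pi]

lemma vecMul_blockdiag {p r : ℕ} (B : Matrix (Fin r) (Fin r) ℂ)
    (M : Matrix (Fin p × Fin r) (Fin p × Fin r) ℂ)
    (hM : ∀ i a j b, M (i, a) (j, b) = if i = j then B a b else 0)
    (w : Fin p × Fin r → ℂ) (j : Fin p) (b : Fin r) :
    (w ᵥ* M) (j, b) = ((fun a => w (j, a)) ᵥ* B) b := by
  simp only [Matrix.vecMul, dotProduct]
  rw [Fintype.sum_prod_type, Finset.sum_comm]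
  refine Finset.sum_congr rfl fun a _ => ?_
  have h : ∀ i : Fin p, w (i, a) * M (i, a) (j, b)
      = if i = j then w (j, a) * B a b else 0 := by
    intro i
    rw [hM]
    by_cases hij : i = j <;> simp [hij]
  rw [Finset.sum_congr rfl fun i _ => h i, Finset.sum_ite_eq' Finset.univ j
    (fun _ => w (j, a) * B a b)]
  simp

lemma vecMul_blockcol {p r : ℕ} (s : Fin r → ℂ)
    (N : Matrix (Fin p × Fin r) (Fin p) ℂ)
    (hN : ∀ i a j, N (i, a) j = if i = j then s a else 0)
    (w : Fin p × Fin r → ℂ) (j : Fin p) :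
    (w ᵥ* N) j = (fun a => w (j, a)) ⬝ᵥ s := by
  simp only [Matrix.vecMul, dotProduct]
  rw [Fintype.sum_prod_type, Finset.sum_comm]
  refine Finset.sum_congr rfl fun a _ => ?_
  have h : ∀ i : Fin p, w (i, a) * N (i, a) j
      = if i = j then w (j, a) * s a else 0 := by
    intro i
    rw [hN]
    by_cases hij : i = j <;> simp [hij]
  rw [Finset.sum_congr rfl fun i _ => h i, Finset.sum_ite_eq' Finset.univ j
    (fun _ => w (j, a) * s a)]
  simp

end

end IMAux

open IMAux

set_option maxHeartbeats 1000000 in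
theorem internal_model_spectral_rank_properties {q r p : ℕ}
    (S : Matrix (Fin q) (Fin q) ℝ)
    (β : Matrix (Fin r) (Fin r) ℝ) (σv : Fin r → ℝ)
    (hβ : β.charpoly = minpoly ℝ S)
    (hctrb : (Matrix.of fun (a : Fin r) (b : Fin r) => (β ^ (b : ℕ)).mulVec σv a).rank = r) :
    let G₁ : Matrix (Fin p × Fin r) (Fin p × Fin r) ℝ :=
      fun x y => if x.1 = y.1 then β x.2 y.2 else 0
    let G₂ : Matrix (Fin p × Fin r) (Fin p) ℝ :=
      fun x j => if x.1 = j then σv x.2 else 0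
    ∀ μ ∈ spectrum ℂ (S.map Complex.ofReal),
      μ ∈ spectrum ℂ (β.map Complex.ofReal) ∧
      (G₁.map Complex.ofReal - μ • 1).rank = p * r - p ∧
      (Matrix.fromCols (G₁.map Complex.ofReal - μ • 1) (G₂.map Complex.ofReal)).rank
        = p * r := by
  intro G₁ G₂ μ hμS
  have hG₁ : ∀ x y : Fin p × Fin r, G₁ x y = if x.1 = y.1 then β x.2 y.2 else 0 := fun _ _ => rfl
  have hG₂ : ∀ (x : Fin p × Fin r) (j : Fin p), G₂ x j = if x.1 = j then σv x.2 else 0 :=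
    fun _ _ => rfl
  set Bc : Matrix (Fin r) (Fin r) ℂ := β.map Complex.ofReal with hBcdef
  set sc : Fin r → ℂ := fun a => (σv a : ℂ) with hscdef
  -- step 1 : μ is an eigenvalue of Bc
  have hofReal : (Complex.ofRealHom : ℝ →+* ℂ) = algebraMap ℝ ℂ := rfl
  have hdvd : minpoly ℂ (S.map Complex.ofReal) ∣ Bc.charpoly := by
    have hc : Bc.charpoly = (β.charpoly).map Complex.ofRealHom :=
      Matrix.charpoly_map β Complex.ofRealHom
    rw [hc, hβ]
    apply minpoly.dvd
    rw [hofReal]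
    rw [Polynomial.aeval_map_algebraMap]
    have : S.map Complex.ofReal = (AlgHom.mapMatrix (Algebra.ofId ℝ ℂ)) S := rfl
    rw [this, Polynomial.aeval_algHom_apply, minpoly.aeval, map_zero]
  have hrootS : (minpoly ℂ (S.map Complex.ofReal)).IsRoot μ :=
    isRoot_minpoly_of_mem_spectrum _ hμS
  have hrootB : Bc.charpoly.IsRoot μ := hrootS.dvd hdvd
  have hμB : μ ∈ spectrum ℂ Bc := (mem_spectrum_iff_isRoot _ _).mpr hrootB
  refine ⟨hμB, ?_⟩
  -- controllability : the complexified controllability matrix has nonzero determinant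
  have hKdet : (Matrix.of fun a b : Fin r => ((β ^ (b : ℕ)) *ᵥ σv) a).det ≠ 0 := by
    intro hdet
    set K := Matrix.of fun a b : Fin r => ((β ^ (b : ℕ)) *ᵥ σv) a with hKdef
    obtain ⟨v, hv, hKv⟩ := Matrix.exists_mulVec_eq_zero_iff.mpr hdet
    have hmem : v ∈ LinearMap.ker K.mulVecLin := by
      rw [LinearMap.mem_ker, Matrix.mulVecLin_apply]; exact hKv
    have hnt : Nontrivial (LinearMap.ker K.mulVecLin) :=
      ⟨⟨⟨v, hmem⟩, 0, by simpa [Subtype.ext_iff] using hv⟩⟩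
    have hpos : 0 < Module.finrank ℝ (LinearMap.ker K.mulVecLin) :=
      Module.finrank_pos_iff.mpr hnt
    have hrn := LinearMap.finrank_range_add_finrank_ker K.mulVecLin
    rw [Module.finrank_pi] at hrn
    rw [Matrix.rank] at hctrb
    simp only [Fintype.card_fin] at hrn
    omega
  have hKc : (Matrix.of fun a b : Fin r => ((Bc ^ (b : ℕ)) *ᵥ sc) a).det ≠ 0 := by
    have hmap : (Matrix.of fun a b : Fin r => ((Bc ^ (b : ℕ)) *ᵥ sc) a)
        = (Matrix.of fun a b : Fin r => ((β ^ (b : ℕ)) *ᵥ σv) a).map Complex.ofReal := by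
      ext a b
      have hpow : Bc ^ (b : ℕ) = (β ^ (b : ℕ)).map Complex.ofReal := by
        have := map_pow (Complex.ofRealHom.mapMatrix) β (b : ℕ)
        simp only [RingHom.mapMatrix_apply] at this
        exact this.symm
      simp only [Matrix.of_apply, Matrix.map_apply, hpow]
      exact (RingHom.map_mulVec Complex.ofRealHom (β ^ (b : ℕ)) σv a).symm
    rw [hmap]
    have hdet : ((Matrix.of fun a b : Fin r => ((β ^ (b : ℕ)) *ᵥ σv) a).map Complex.ofReal).det
        = ((Matrix.of fun a b : Fin r => ((β ^ (b : ℕ)) *ᵥ σv) a).det : ℂ) :=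
      (RingHom.map_det Complex.ofRealHom _).symm
    rw [hdet]
    exact Complex.ofReal_ne_zero.mpr hKdet
  -- the left kernel of Bc - μ•1 has dimension 1
  have hmemB : ∀ w : Fin r → ℂ, w ᵥ* (Bc - μ • 1) = 0 ↔ w ᵥ* Bc = μ • w := by
    intro w
    rw [Matrix.vecMul_sub, sub_eq_zero, vecMul_smul_mat, Matrix.vecMul_one]
  have hkerB : Module.finrank ℂ (LinearMap.ker (Bc - μ • (1 : Matrix (Fin r) (Fin r) ℂ)).vecMulLinear) = 1 := by
    set Kr := LinearMap.ker (Bc - μ • (1 : Matrix (Fin r) (Fin r) ℂ)).vecMulLinear with hKr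
    have hmemKr : ∀ w : Fin r → ℂ, w ∈ Kr ↔ w ᵥ* Bc = μ • w := by
      intro w
      rw [hKr, LinearMap.mem_ker, Matrix.vecMulLinear_apply, hmemB]
    let f : Kr →ₗ[ℂ] ℂ :=
      { toFun := fun w => (w : Fin r → ℂ) ⬝ᵥ sc
        map_add' := fun x y => by simp [add_dotProduct]
        map_smul' := fun c x => by simp [smul_dotProduct] }
    have hinj : Function.Injective f := by
      rw [← LinearMap.ker_eq_bot]
      rw [Submodule.eq_bot_iff]
      intro w hw
      have h1 : (w : Fin r → ℂ) ᵥ* Bc = μ • (w : Fin r → ℂ) := (hmemKr _).mp w.2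
      have h2 : (w : Fin r → ℂ) ⬝ᵥ sc = 0 := hw
      exact Subtype.ext (pbh_zero hKc h1 h2)
    have hle : Module.finrank ℂ Kr ≤ 1 := by
      have := LinearMap.finrank_le_finrank_of_injective hinj
      simpa using this
    have hge : 0 < Module.finrank ℂ Kr := by
      have hdet0 : (μ • (1 : Matrix (Fin r) (Fin r) ℂ) - Bc).det = 0 := by
        have hnu := spectrum.mem_iff.mp hμB
        rw [Algebra.algebraMap_eq_smul_one] at hnu
        by_contra hne
        exact hnu ((Matrix.isUnit_iff_isUnit_det _).mpr (isUnit_iff_ne_zero.mpr hne))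
      obtain ⟨v, hv0, hveq⟩ := Matrix.exists_vecMul_eq_zero_iff.mpr hdet0
      have hvB : v ᵥ* Bc = μ • v := by
        have := hveq
        rw [Matrix.vecMul_sub, sub_eq_zero, vecMul_smul_mat, Matrix.vecMul_one] at this
        exact this.symm
      have hvmem : v ∈ Kr := (hmemKr v).mpr hvB
      have hnt : Nontrivial Kr := ⟨⟨⟨v, hvmem⟩, 0, by simpa [Subtype.ext_iff] using hv0⟩⟩
      exact Module.finrank_pos_iff.mpr hnt
    omega
  -- block structure
  set A : Matrix (Fin p × Fin r) (Fin p × Fin r) ℂ :=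
    G₁.map Complex.ofReal - μ • 1 with hAdef
  have hM : ∀ (i : Fin p) (a : Fin r) (j : Fin p) (b : Fin r),
      A (i, a) (j, b) = if i = j then (Bc - μ • (1 : Matrix (Fin r) (Fin r) ℂ)) a b else 0 := by
    intro i a j b
    simp only [hAdef, Matrix.sub_apply, Matrix.map_apply, Matrix.smul_apply, Matrix.one_apply,
      hG₁, Matrix.sub_apply, hBcdef]
    by_cases hij : i = j
    · subst hij
      by_cases hab : a = b
      · subst hab; simp [Prod.ext_iff]
      · simp [Prod.ext_iff, hab]
    · simp [Prod.ext_iff, hij]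
  have hN : ∀ (i : Fin p) (a : Fin r) (j : Fin p),
      (G₂.map Complex.ofReal) (i, a) j = if i = j then sc a else 0 := by
    intro i a j
    simp only [Matrix.map_apply, hG₂, hscdef]
    by_cases hij : i = j <;> simp [hij]
  -- kernel of A via slices
  have hmemA : ∀ w : Fin p × Fin r → ℂ,
      w ∈ LinearMap.ker A.vecMulLinear ↔
        ∀ j : Fin p, (fun a => w (j, a)) ∈
          LinearMap.ker (Bc - μ • (1 : Matrix (Fin r) (Fin r) ℂ)).vecMulLinear := by
    intro w
    simp only [LinearMap.mem_ker, Matrix.vecMulLinear_apply]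
    constructor
    · intro h j
      funext b
      have := congrFun h (j, b)
      rw [vecMul_blockdiag _ _ hM w j b] at this
      exact this
    · intro h
      funext x
      obtain ⟨j, b⟩ := x
      rw [vecMul_blockdiag _ _ hM w j b]
      exact congrFun (h j) b
  have hkerA : Module.finrank ℂ (LinearMap.ker A.vecMulLinear) = p := by
    let E : (LinearMap.ker A.vecMulLinear) ≃ₗ[ℂ]
        (Fin p → LinearMap.ker (Bc - μ • (1 : Matrix (Fin r) (Fin r) ℂ)).vecMulLinear) :=
      { toFun := fun w j => ⟨fun a => (w : Fin p × Fin r → ℂ) (j, a), (hmemA _).mp w.2 j⟩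
        map_add' := fun x y => by funext j; exact Subtype.ext rfl
        map_smul' := fun c x => by funext j; exact Subtype.ext rfl
        invFun := fun g => ⟨fun x => (g x.1 : Fin r → ℂ) x.2,
          (hmemA _).mpr fun j => (g j).2⟩
        left_inv := fun w => Subtype.ext rfl
        right_inv := fun g => funext fun j => Subtype.ext rfl }
    rw [LinearEquiv.finrank_eq E, Module.finrank_pi_fintype]
    simp [hkerB]
  have hcard : Fintype.card (Fin p × Fin r) = p * r := by simp
  constructor
  · have h := rank_add_finrank_leftker A
    rw [hkerA, hcard] at h
    omega
  · -- full row rank for [A, G₂c]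
    have hkerF : LinearMap.ker (Matrix.fromCols A (G₂.map Complex.ofReal)).vecMulLinear = ⊥ := by
      rw [LinearMap.ker_eq_bot']
      intro w hw
      rw [Matrix.vecMulLinear_apply, Matrix.vecMul_fromCols] at hw
      have hwA : w ᵥ* A = 0 := by
        funext x
        exact congrFun hw (Sum.inl x)
      have hwG : w ᵥ* (G₂.map Complex.ofReal) = 0 := by
        funext x
        exact congrFun hw (Sum.inr x)
      have hzero : ∀ j : Fin p, (fun a => w (j, a)) = 0 := by
        intro j
        have h1 : (fun a => w (j, a)) ᵥ* Bc = μ • (fun a => w (j, a)) := by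
          rw [← hmemB]
          funext b
          rw [← vecMul_blockdiag _ _ hM w j b]
          exact congrFun hwA (j, b)
        have h2 : (fun a => w (j, a)) ⬝ᵥ sc = 0 := by
          rw [← vecMul_blockcol _ _ hN w j]
          exact congrFun hwG j
        exact pbh_zero hKc h1 h2
      funext x
      exact congrFun (hzero x.1) x.2
    have h := rank_add_finrank_leftker (Matrix.fromCols A (G₂.map Complex.ofReal))
    rw [hkerF, finrank_bot, hcard] at h
    omega
end
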